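/- Let θ = (θ₁,…,θₙ) ∈ ℝⁿ be such that 1, θ₁, …, θₙ are linearly independent over ℤ, and let m, m′ be best approximations to θ (with respect to the weights j₁,…,jₙ) with M_m < M_{m′} such that no best approximation m″ to θ satisfies M_m < M_{m″} < M_{m′}. Then ‖m·θ‖ · M_{m′} ≤ 1. -/

import Mathlib

open scoped BigOperators

/-- Distance from a real number to the nearest integer. -/
noncomputable def nearInt (x : ℝ) : ℝ := |x - round x|

/-- The height `M_m = max_i |m_i|^(1/j_i)` of an integer vector. -/
noncomputable def height (n : ℕ) (j : Fin n → ℝ) (m : Fin n → ℤ) : ℝ :=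
  ⨆ i, (|m i| : ℝ) ^ (1 / j i)

/-- `m ∈ ℤⁿ \ {0}` is a best approximation to `θ` with respect to the weights `j`. -/
def IsBestApprox (n : ℕ) (j θ : Fin n → ℝ) (m : Fin n → ℤ) : Prop :=
  m ≠ 0 ∧ ∀ v : Fin n → ℤ, v ≠ 0 → v ≠ m → v ≠ -m →
    height n j v ≤ height n j m →
    nearInt (∑ i, (m i : ℝ) * θ i) < nearInt (∑ i, (v i : ℝ) * θ i)

/-- `1, θ₁, …, θₙ` are linearly independent over `ℤ`. -/
def ZLinIndep (n : ℕ) (θ : Fin n → ℝ) : Prop :=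
  ∀ (a₀ : ℤ) (a : Fin n → ℤ), (a₀ : ℝ) + ∑ i, (a i : ℝ) * θ i = 0 → a₀ = 0 ∧ a = 0

open MeasureTheory




lemma nearInt_nonneg (x : ℝ) : 0 ≤ nearInt x := abs_nonneg _

lemma nearInt_le_abs_sub (x : ℝ) (k : ℤ) : nearInt x ≤ |x - k| := by
  rcases eq_or_ne k (round x) with rfl | hk
  · exact le_of_eq rfl
  · have h1 : (1 : ℝ) ≤ |(round x : ℝ) - k| := by
      have h := Int.one_le_abs (sub_ne_zero.mpr (Ne.symm hk))
      exact_mod_cast h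
    have h2 : |x - round x| ≤ 1 / 2 := abs_sub_round x
    have h3 : |(round x : ℝ) - (k : ℝ)| ≤ |(round x : ℝ) - x| + |x - (k : ℝ)| := abs_sub_le _ _ _
    rw [abs_sub_comm ((round x : ℝ)) x] at h3
    unfold nearInt
    linarith

lemma nearInt_neg (x : ℝ) : nearInt (-x) = nearInt x := by
  have h1 : nearInt (-x) ≤ |(-x) - (-(round x : ℤ) : ℤ)| := nearInt_le_abs_sub _ _
  have h2 : nearInt x ≤ |x - (-(round (-x) : ℤ) : ℤ)| := nearInt_le_abs_sub _ _
  push_cast at h1 h2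
  rw [show -x - -(round x : ℝ) = -(x - round x) by ring, abs_neg] at h1
  rw [show x - -(round (-x) : ℝ) = -(-x - round (-x)) by ring, abs_neg] at h2
  exact le_antisymm h1 h2

lemma rpow_le_height (n : ℕ) (j : Fin n → ℝ) (m : Fin n → ℤ) (i : Fin n) :
    (|m i| : ℝ) ^ (1 / j i) ≤ height n j m :=
  le_ciSup (f := fun i => (|m i| : ℝ) ^ (1 / j i))
    (Set.Finite.bddAbove (Set.finite_range _)) i

lemma height_nonneg (n : ℕ) (hn : 1 ≤ n) (j : Fin n → ℝ) (m : Fin n → ℤ) :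
    0 ≤ height n j m := by
  have i : Fin n := ⟨0, hn⟩
  refine le_trans ?_ (rpow_le_height n j m i)
  exact Real.rpow_nonneg (abs_nonneg _) _

lemma abs_le_height_rpow (n : ℕ) (hn : 1 ≤ n) (j : Fin n → ℝ) (hj : ∀ i, 0 < j i)
    (m : Fin n → ℤ) (i : Fin n) : (|m i| : ℝ) ≤ height n j m ^ j i := by
  have habs : (0 : ℝ) ≤ (|m i| : ℝ) := abs_nonneg _
  have h := rpow_le_height n j m i
  have h2 : ((|m i| : ℝ) ^ (1 / j i)) ^ j i ≤ height n j m ^ j i :=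
    Real.rpow_le_rpow (Real.rpow_nonneg habs _) h (hj i).le
  rwa [← Real.rpow_mul habs, one_div, inv_mul_cancel₀ (hj i).ne', Real.rpow_one] at h2

lemma height_le (n : ℕ) (hn : 1 ≤ n) (j : Fin n → ℝ) (hj : ∀ i, 0 < j i)
    (m : Fin n → ℤ) (Q : ℝ) (hQ : 0 ≤ Q) (h : ∀ i, (|m i| : ℝ) ≤ Q ^ j i) :
    height n j m ≤ Q := by
  haveI : Nonempty (Fin n) := ⟨⟨0, hn⟩⟩
  refine ciSup_le fun i => ?_
  calc (|m i| : ℝ) ^ (1 / j i) ≤ (Q ^ j i) ^ (1 / j i) :=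
        Real.rpow_le_rpow (abs_nonneg _) (h i)
          (one_div_nonneg.mpr (hj i).le)
    _ = Q := by
        rw [← Real.rpow_mul hQ, mul_one_div, div_self (hj i).ne', Real.rpow_one]

lemma one_le_height (n : ℕ) (hn : 1 ≤ n) (j : Fin n → ℝ) (hj : ∀ i, 0 < j i)
    (m : Fin n → ℤ) (hm : m ≠ 0) : 1 ≤ height n j m := by
  obtain ⟨i, hi⟩ : ∃ i, m i ≠ 0 := by
    by_contra h; push_neg at h; exact hm (funext h)
  refine le_trans ?_ (rpow_le_height n j m i)
  have : (1 : ℝ) ≤ (|m i| : ℝ) := by exact_mod_cast Int.one_le_abs hi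
  exact Real.one_le_rpow this (one_div_nonneg.mpr (hj i).le)



lemma eq_or_neg_of_nearInt_eq (n : ℕ) (θ : Fin n → ℝ) (hθ : ZLinIndep n θ)
    (u w : Fin n → ℤ)
    (h : nearInt (∑ i, (u i : ℝ) * θ i) = nearInt (∑ i, (w i : ℝ) * θ i)) :
    u = w ∨ u = -w := by
  set x := ∑ i, (u i : ℝ) * θ i with hx
  set y := ∑ i, (w i : ℝ) * θ i with hy
  rcases abs_eq_abs.mp h with h' | h'
  · left
    have key : ((round y - round x : ℤ) : ℝ) + ∑ i, ((u i - w i : ℤ) : ℝ) * θ i = 0 := by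
      push_cast
      rw [Finset.sum_congr rfl (fun i _ => sub_mul ((u i : ℝ)) (w i) (θ i)),
        Finset.sum_sub_distrib]
      rw [hx, hy] at h'
      linarith
    have := (hθ _ _ key).2
    funext i
    have := congrFun this i
    simpa [sub_eq_zero] using this
  · right
    have key : ((-round x - round y : ℤ) : ℝ) + ∑ i, ((u i + w i : ℤ) : ℝ) * θ i = 0 := by
      push_cast
      rw [Finset.sum_congr rfl (fun i _ => add_mul ((u i : ℝ)) (w i) (θ i)),
        Finset.sum_add_distrib]
      rw [hx, hy] at h'
      linarith
    have := (hθ _ _ key).2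
    funext i
    have h2 : u i + w i = 0 := by simpa using congrFun this i
    simp only [Pi.neg_apply]
    omega

lemma nearInt_sum_neg (n : ℕ) (θ : Fin n → ℝ) (m : Fin n → ℤ) :
    nearInt (∑ i, ((-m) i : ℝ) * θ i) = nearInt (∑ i, (m i : ℝ) * θ i) := by
  have : ∑ i, ((-m) i : ℝ) * θ i = -(∑ i, (m i : ℝ) * θ i) := by
    rw [← Finset.sum_neg_distrib]
    refine Finset.sum_congr rfl fun i _ => ?_
    simp [Pi.neg_apply]
  rw [this, nearInt_neg]

lemma min_between (n : ℕ) (hn : 1 ≤ n) (θ j : Fin n → ℝ)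
    (hj : ∀ i, 0 < j i) (hθ : ZLinIndep n θ)
    (m m' : Fin n → ℤ) (hm : IsBestApprox n j θ m) (hm' : IsBestApprox n j θ m')
    (hlt : height n j m < height n j m')
    (hgap : ¬ ∃ m'' : Fin n → ℤ, IsBestApprox n j θ m'' ∧
      height n j m < height n j m'' ∧ height n j m'' < height n j m')
    (v : Fin n → ℤ) (hv0 : v ≠ 0) (hvlt : height n j v < height n j m') :
    nearInt (∑ i, (m i : ℝ) * θ i) ≤ nearInt (∑ i, (v i : ℝ) * θ i) := by
  classical
  set H := height n j v with hH
  set B : Fin n → ℤ := fun i => ⌊H ^ j i⌋ with hB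
  have habsle : ∀ w : Fin n → ℤ, height n j w ≤ H → ∀ i, |w i| ≤ B i := by
    intro w hw i
    rw [hB, Int.le_floor, Int.cast_abs]
    calc (|(w i : ℝ)| : ℝ) ≤ height n j w ^ j i := abs_le_height_rpow n hn j hj w i
      _ ≤ H ^ j i := Real.rpow_le_rpow (height_nonneg n hn j w) hw (hj i).le
  set S : Finset (Fin n → ℤ) :=
    (Finset.Icc (-B) B).filter (fun w => w ≠ 0 ∧ height n j w ≤ H) with hS
  have hmemS : ∀ w : Fin n → ℤ, w ≠ 0 → height n j w ≤ H → w ∈ S := by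
    intro w hw0 hwle
    rw [hS, Finset.mem_filter, Finset.mem_Icc]
    refine ⟨⟨?_, ?_⟩, hw0, hwle⟩
    · intro i; have := abs_le.mp (habsle w hwle i); simp only [Pi.neg_apply]; linarith [this.1]
    · intro i; exact (abs_le.mp (habsle w hwle i)).2
  have hvS : v ∈ S := hmemS v hv0 le_rfl
  obtain ⟨w₀, hw₀S, hw₀min⟩ :=
    S.exists_min_image (fun w => nearInt (∑ i, (w i : ℝ) * θ i)) ⟨v, hvS⟩
  obtain ⟨-, hw₀0, hw₀le⟩ := Finset.mem_filter.mp hw₀S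
  have hw₀best : IsBestApprox n j θ w₀ := by
    refine ⟨hw₀0, fun u hu0 huw huw' hule => ?_⟩
    have huS : u ∈ S := hmemS u hu0 (hule.trans hw₀le)
    have hle := hw₀min u huS
    refine lt_of_le_of_ne hle fun heq => ?_
    rcases eq_or_neg_of_nearInt_eq n θ hθ w₀ u heq with h | h
    · exact huw h.symm
    · apply huw'
      rw [h]; funext i; simp
  have hmin_le_v := hw₀min v hvS
  rcases eq_or_ne w₀ m with rfl | hwm
  · exact hmin_le_v
  rcases eq_or_ne w₀ (-m) with rfl | hwm'
  · rw [nearInt_sum_neg] at hmin_le_v; exact hmin_le_v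
  by_cases hh : height n j w₀ ≤ height n j m
  · exact le_trans (hm.2 w₀ hw₀0 hwm hwm' hh).le hmin_le_v
  · exact absurd ⟨w₀, hw₀best, lt_of_not_ge hh, lt_of_le_of_lt hw₀le hvlt⟩ hgap



section
variable (n : ℕ) (θ j : Fin n → ℝ)

noncomputable def Mmat : Matrix (Fin (n+1)) (Fin (n+1)) ℝ :=
  fun k l => if k = l then 1 else if k = 0 then (Fin.cons (0:ℝ) θ : Fin (n+1) → ℝ) l else 0

lemma Mmat_tri : (Mmat n θ).BlockTriangular id := by
  intro k l hlk
  have hk0 : k ≠ 0 := by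
    intro h; subst h; exact absurd hlk (by simp)
  have hkl : k ≠ l := ne_of_gt hlk
  simp [Mmat, hkl, hk0]

lemma Mmat_det : (Mmat n θ).det = 1 := by
  rw [Matrix.det_of_upperTriangular (Mmat_tri n θ)]
  simp [Mmat]

lemma Mmat_apply_succ (y : Fin (n+1) → ℝ) (i : Fin n) :
    Matrix.toLin' (Mmat n θ) y i.succ = y i.succ := by
  simp [Matrix.toLin'_apply, Matrix.mulVec, dotProduct, Mmat, Fin.succ_ne_zero,
    ite_mul, Finset.sum_ite_eq]

lemma Mmat_apply_zero (y : Fin (n+1) → ℝ) :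
    Matrix.toLin' (Mmat n θ) y 0 = y 0 + ∑ i, θ i * y i.succ := by
  simp only [Matrix.toLin'_apply, Matrix.mulVec, dotProduct, Mmat, Fin.sum_univ_succ]
  simp only [if_true, eq_self_iff_true, one_mul]
  congr 1
end

lemma dirichlet (n : ℕ) (θ j : Fin n → ℝ) (hj : ∀ i, 0 < j i)
    (hsum : ∑ i, j i = 1) (Q : ℝ) (hQ : 1 < Q) :
    ∃ v : Fin n → ℤ, v ≠ 0 ∧ (∀ i, |(v i : ℝ)| ≤ Q ^ j i) ∧
      nearInt (∑ i, (v i : ℝ) * θ i) ≤ 1 / Q := by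
  classical
  have hQ0 : (0:ℝ) < Q := lt_trans one_pos hQ
  set c : Fin (n+1) → ℝ := Fin.cons (1/Q) (fun i => Q ^ j i) with hc
  have hc0 : ∀ k, 0 < c k := by
    intro k
    refine Fin.cases ?_ ?_ k
    · simp [hc]; positivity
    · intro i; simp [hc]; positivity
  set box : Set (Fin (n+1) → ℝ) := Set.univ.pi fun k => Set.Icc (-(c k)) (c k) with hbox
  set f := Matrix.toLin' (Mmat n θ) with hf
  have hdetf : LinearMap.det f = 1 := by rw [hf, LinearMap.det_toLin', Mmat_det]
  set s : Set (Fin (n+1) → ℝ) := f ⁻¹' box with hs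
  -- convexity / symmetry / compactness
  have hconv : Convex ℝ s := (convex_pi fun k _ => convex_Icc _ _).linear_preimage f
  have hsymm : ∀ x ∈ s, -x ∈ s := by
    intro x hx
    simp only [hs, Set.mem_preimage, hbox, Set.mem_pi, Set.mem_univ, Set.mem_Icc,
      forall_true_left] at hx ⊢
    intro k
    have h1 := hx k
    have h2 : f (-x) k = -(f x k) := by rw [map_neg]; rfl
    rw [h2]
    constructor <;> linarith [h1.1, h1.2]
  have hMinv : Invertible (Mmat n θ) :=
    (Mmat n θ).invertibleOfIsUnitDet (by rw [Mmat_det]; exact isUnit_one)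
  have hcpt : IsCompact s := by
    have hbox_cpt : IsCompact box := isCompact_univ_pi fun k => isCompact_Icc
    set e := (Mmat n θ).toLinearEquiv' hMinv with he
    have h1 : s = ⇑(e.toEquiv.symm) '' box := by
      rw [hs, Equiv.image_symm_eq_preimage]
      rfl
    rw [h1]
    exact hbox_cpt.image
      (show Continuous ⇑(e.toEquiv.symm) from e.symm.toLinearMap.continuous_of_finiteDimensional)
  -- volume of s
  have hvol_box : volume box = ENNReal.ofReal (2 ^ (n+1)) := by
    rw [hbox, volume_pi_pi]
    have : ∀ k, volume (Set.Icc (-(c k)) (c k)) = ENNReal.ofReal (2 * c k) := by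
      intro k; rw [Real.volume_Icc]; ring_nf
    simp_rw [this]
    rw [← ENNReal.ofReal_prod_of_nonneg (fun k _ => by have := hc0 k; linarith)]
    congr 1
    rw [Finset.prod_mul_distrib, Finset.prod_const, Fin.prod_univ_succ]
    simp only [hc, Fin.cons_zero, Fin.cons_succ]
    rw [← Real.rpow_sum_of_pos hQ0, hsum, Real.rpow_one, Finset.card_univ, Fintype.card_fin]
    field_simp
  have hvol_s : volume s = ENNReal.ofReal (2 ^ (n+1)) := by
    rw [hs, MeasureTheory.Measure.addHaar_preimage_linearMap volume (by rw [hdetf]; norm_num) box,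
      hdetf, hvol_box]
    norm_num
  -- the lattice
  set b := Pi.basisFun ℝ (Fin (n+1)) with hb
  haveI : IsZLattice ℝ (Submodule.span ℤ (Set.range ⇑b)) := inferInstance
  haveI : Countable ↥((Submodule.span ℤ (Set.range ⇑b)).toAddSubgroup) :=
    (inferInstance : Countable ↥(Submodule.span ℤ (Set.range ⇑b)))
  have fund := ZSpan.isAddFundamentalDomain' b (volume : Measure (Fin (n+1) → ℝ))
  have hfund_vol : volume (ZSpan.fundamentalDomain b) = 1 := by
    rw [hb, ZSpan.fundamentalDomain_pi_basisFun, volume_pi_pi]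
    simp [Real.volume_Ico]
  obtain ⟨x, hx0, hxs⟩ := exists_ne_zero_mem_lattice_of_measure_mul_two_pow_le_measure
    fund hsymm hconv hcpt (by
      rw [hfund_vol, hvol_s, Module.finrank_fin_fun, one_mul, ENNReal.ofReal_pow (by norm_num)]
      norm_num)
  -- extract integer coordinates
  have hxmem : (↑↑x : Fin (n+1) → ℝ) ∈ Submodule.span ℤ (Set.range ⇑b) := x.2
  obtain ⟨a, ha⟩ := (Submodule.mem_span_range_iff_exists_fun ℤ).mp hxmem
  have hcoord : ∀ k, (↑↑x : Fin (n+1) → ℝ) k = (a k : ℝ) := by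
    intro k
    rw [← ha]
    simp [hb, Pi.basisFun_apply, Finset.sum_apply, Pi.single_apply]
  have hxs' : ∀ k, -(c k) ≤ f ↑↑x k ∧ f ↑↑x k ≤ c k := by
    have := hxs
    simp only [hs, Set.mem_preimage, hbox, Set.mem_pi, Set.mem_univ, Set.mem_Icc,
      forall_true_left] at this
    exact this
  have h0 : |(a 0 : ℝ) + ∑ i, θ i * (a i.succ : ℝ)| ≤ 1 / Q := by
    have h := hxs' 0
    rw [hf, Mmat_apply_zero] at h
    simp only [hcoord] at h
    have hc0' : c 0 = 1 / Q := by simp [hc]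
    rw [abs_le]
    constructor <;> [skip; skip] <;> rw [← hc0'] <;> [exact h.1; exact h.2]
  have hi : ∀ i : Fin n, |(a i.succ : ℝ)| ≤ Q ^ j i := by
    intro i
    have h := hxs' i.succ
    rw [hf, Mmat_apply_succ] at h
    rw [hcoord] at h
    have hcs : c i.succ = Q ^ j i := by simp [hc]
    rw [abs_le]
    constructor <;> rw [← hcs] <;> [exact h.1; exact h.2]
  refine ⟨fun i => a i.succ, ?_, fun i => hi i, ?_⟩
  · intro hv
    have hsucc : ∀ i : Fin n, a i.succ = 0 := fun i => congrFun hv i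
    have ha0 : a 0 = 0 := by
      have : |(a 0 : ℝ)| < 1 := by
        have : ∑ i, θ i * (a i.succ : ℝ) = 0 := by
          refine Finset.sum_eq_zero fun i _ => ?_
          rw [hsucc i]; simp
        have h2 := h0
        rw [this, add_zero] at h2
        have : 1 / Q < 1 := by rw [div_lt_one hQ0]; exact hQ
        linarith [h2]
      rw [← Int.cast_abs] at this
      have h3 : |a 0| < 1 := by exact_mod_cast this
      exact Int.abs_lt_one_iff.mp h3
    have hA : a = 0 := by
      funext k
      refine Fin.cases ?_ ?_ k
      · exact ha0
      · exact hsucc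
    apply hx0
    have : (↑↑x : Fin (n+1) → ℝ) = 0 := by
      funext k
      rw [hcoord k, hA]
      simp
    exact Subtype.ext this
  · have heq : ∑ i, ((a i.succ : ℝ)) * θ i - ((-(a 0) : ℤ) : ℝ)
        = (a 0 : ℝ) + ∑ i, θ i * (a i.succ : ℝ) := by
      push_cast
      rw [Finset.sum_congr rfl fun i _ => mul_comm ((a i.succ : ℝ)) (θ i)]
      ring
    calc nearInt (∑ i, ((a i.succ : ℝ)) * θ i)
        ≤ |∑ i, ((a i.succ : ℝ)) * θ i - ((-(a 0) : ℤ) : ℝ)| := nearInt_le_abs_sub _ _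
      _ = |(a 0 : ℝ) + ∑ i, θ i * (a i.succ : ℝ)| := by rw [heq]
      _ ≤ 1 / Q := h0



theorem statement6 (n : ℕ) (hn : 1 ≤ n) (θ j : Fin n → ℝ)
    (hj : ∀ i, 0 < j i) (hsum : ∑ i, j i = 1) (hθ : ZLinIndep n θ)
    (m m' : Fin n → ℤ) (hm : IsBestApprox n j θ m) (hm' : IsBestApprox n j θ m')
    (hlt : height n j m < height n j m')
    (hgap : ¬ ∃ m'' : Fin n → ℤ, IsBestApprox n j θ m'' ∧
      height n j m < height n j m'' ∧ height n j m'' < height n j m') :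
    nearInt (∑ i, (m i : ℝ) * θ i) * height n j m' ≤ 1 := by
  set cst := nearInt (∑ i, (m i : ℝ) * θ i) with hcst
  have hc0 : 0 ≤ cst := nearInt_nonneg _
  have hH1 : 1 < height n j m' := lt_of_le_of_lt (one_le_height n hn j hj m hm.1) hlt
  by_contra hcon
  push_neg at hcon
  have hcpos : 0 < cst := by
    rcases lt_or_eq_of_le hc0 with h | h
    · exact h
    · rw [← h, zero_mul] at hcon; linarith
  have h1c : 1 / cst < height n j m' := by
    rw [div_lt_iff₀ hcpos]
    calc (1:ℝ) < cst * height n j m' := hcon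
      _ = height n j m' * cst := mul_comm _ _
  have hmax : max 1 (1 / cst) < height n j m' := max_lt hH1 h1c
  set Q : ℝ := (max 1 (1 / cst) + height n j m') / 2 with hQdef
  have hQgt : max 1 (1 / cst) < Q := by rw [hQdef]; linarith
  have hQH : Q < height n j m' := by rw [hQdef]; linarith
  have hQ1 : 1 < Q := lt_of_le_of_lt (le_max_left _ _) hQgt
  have hQc : 1 / cst < Q := lt_of_le_of_lt (le_max_right _ _) hQgt
  have hQ0 : (0:ℝ) < Q := lt_trans one_pos hQ1
  obtain ⟨v, hv0, hvb, hvn⟩ := dirichlet n θ j hj hsum Q hQ1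
  have hvh : height n j v < height n j m' :=
    lt_of_le_of_lt (height_le n hn j hj v Q hQ0.le hvb) hQH
  have hle : cst ≤ nearInt (∑ i, (v i : ℝ) * θ i) :=
    min_between n hn θ j hj hθ m m' hm hm' hlt hgap v hv0 hvh
  have h1 : cst ≤ 1 / Q := le_trans hle hvn
  have h2 : 1 / Q < cst := by
    rw [div_lt_iff₀ hQ0]
    have := (div_lt_iff₀ hcpos).mp hQc
    linarith
  linarith
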